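/- Let A and B be nonnegative selfadjoint operators on a Hilbert space. Then for every natural number n, ‖(e^{−A/2ⁿ} e^{−B/2ⁿ})^{2ⁿ}‖ ≤ ‖e^{−A/2ⁿ} e^{−B/2ⁿ}‖^{2ⁿ} ≤ ‖e^{−A} e^{−B}‖. -/

import Mathlib

open MeasureTheory Filter
open scoped NNReal ENNReal
noncomputable section

/-- `S` is the semigroup `t ↦ e^{-tA}` of a nonnegative selfadjoint operator `A`:
a strongly continuous semigroup of selfadjoint contractions. -/
def IsNonnegSelfAdjointSemigroup {H : Type*} [NormedAddCommGroup H]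
    [InnerProductSpace ℂ H] [CompleteSpace H] (S : ℝ → H →L[ℂ] H) : Prop :=
  S 0 = 1 ∧
  (∀ s t : ℝ, 0 ≤ s → 0 ≤ t → S (s + t) = (S s).comp (S t)) ∧
  (∀ t : ℝ, 0 ≤ t → IsSelfAdjoint (S t)) ∧
  (∀ t : ℝ, 0 ≤ t → ‖S t‖ ≤ 1) ∧
  (∀ x : H, ContinuousOn (fun t => S t x) (Set.Ici (0 : ℝ)))

/-- `U` is the semigroup `t ↦ e^{-t(A+B)}` of the closed quadratic form sum `A + B`
(extended by `0` on the orthogonal complement of the closure of `Q(A) ∩ Q(B)`),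
characterized by Kato's Trotter product formula for form sums. -/
def IsTrotterFormSumSemigroup {H : Type*} [NormedAddCommGroup H]
    [InnerProductSpace ℂ H] [CompleteSpace H] (S T U : ℝ → H →L[ℂ] H) : Prop :=
  ∀ t : ℝ, 0 < t → ∀ x : H,
    Filter.Tendsto (fun n : ℕ => (((S (t / 2 ^ n)).comp (T (t / 2 ^ n))) ^ (2 ^ n)) x)
      Filter.atTop (nhds (U t x))

/-- Dropping `0` from a set does not change the sup of nnnorms. -/
lemma iSup_nnnorm_diff_zero (s : Set ℂ) :
    (⨆ k ∈ s, (‖k‖₊ : ℝ≥0∞)) = ⨆ k ∈ s \ {0}, (‖k‖₊ : ℝ≥0∞) := by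
  apply le_antisymm
  · refine iSup₂_le fun k hk => ?_
    rcases eq_or_ne k 0 with rfl | h
    · simp
    · exact le_iSup₂ (f := fun k (_ : k ∈ s \ {0}) => (‖k‖₊ : ℝ≥0∞)) k ⟨hk, h⟩
  · exact iSup₂_le fun k hk =>
      le_iSup₂ (f := fun k (_ : k ∈ s) => (‖k‖₊ : ℝ≥0∞)) k hk.1

/-- The spectral radius is invariant under swapping factors. -/
lemma spectralRadius_mul_comm {A : Type*} [NormedRing A] [NormedAlgebra ℂ A]
    (a b : A) : spectralRadius ℂ (a * b) = spectralRadius ℂ (b * a) := by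
  simp only [spectralRadius]
  rw [iSup_nnnorm_diff_zero (spectrum ℂ (a * b)), spectrum.nonzero_mul_comm,
    ← iSup_nnnorm_diff_zero]

/-- Key step: for selfadjoint operators `s`, `t`, `‖s t‖² ≤ ‖s² t²‖`. -/
lemma key_step {H : Type*} [NormedAddCommGroup H] [InnerProductSpace ℂ H]
    [CompleteSpace H] (s t : H →L[ℂ] H) (hs : IsSelfAdjoint s) (ht : IsSelfAdjoint t) :
    ‖s * t‖ ^ 2 ≤ ‖(s * s) * (t * t)‖ := by
  cases subsingleton_or_nontrivial H
  · have : ∀ u : H →L[ℂ] H, u = 0 := fun u => Subsingleton.elim u 0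
    simp [this (s * t), this ((s*s)*(t*t))]
  have h1 : ‖s * t‖ ^ 2 = ‖t * (s * s) * t‖ := by
    rw [sq, ← CStarRing.norm_star_mul_self (x := s * t)]
    congr 1
    rw [star_mul, hs.star_eq, ht.star_eq]
    noncomm_ring
  rw [h1]
  have hsa : IsSelfAdjoint (t * (s * s) * t) := by
    rw [isSelfAdjoint_iff]
    simp only [star_mul, hs.star_eq, ht.star_eq]
    noncomm_ring
  have h2 : (‖t * (s * s) * t‖₊ : ℝ≥0∞) ≤ (‖(t * t) * (s * s)‖₊ : ℝ≥0∞) := by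
    rw [← hsa.spectralRadius_eq_nnnorm]
    calc spectralRadius ℂ ((t * (s * s)) * t)
        = spectralRadius ℂ (t * (t * (s * s))) := spectralRadius_mul_comm _ _
      _ = spectralRadius ℂ ((t * t) * (s * s)) := by rw [mul_assoc]
      _ ≤ ‖(t * t) * (s * s)‖₊ := spectrum.spectralRadius_le_nnnorm _
  have h3 : ‖(t * t) * (s * s)‖ = ‖(s * s) * (t * t)‖ := by
    rw [← norm_star ((s * s) * (t * t)), star_mul, star_mul, star_mul,
      hs.star_eq, ht.star_eq]
  have := ENNReal.coe_le_coe.mp h2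
  calc ‖t * (s * s) * t‖ ≤ ‖(t * t) * (s * s)‖ := this
    _ = ‖(s * s) * (t * t)‖ := h3

/-- `‖(e^{-A/2ⁿ} e^{-B/2ⁿ})^{2ⁿ}‖ ≤ ‖e^{-A/2ⁿ} e^{-B/2ⁿ}‖^{2ⁿ} ≤ ‖e^{-A} e^{-B}‖`. -/
theorem statement7 {H : Type*} [NormedAddCommGroup H] [InnerProductSpace ℂ H]
    [CompleteSpace H] (S T : ℝ → H →L[ℂ] H)
    (hS : IsNonnegSelfAdjointSemigroup S) (hT : IsNonnegSelfAdjointSemigroup T) :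
    ∀ n : ℕ,
      ‖((S (1 / 2 ^ n)).comp (T (1 / 2 ^ n))) ^ (2 ^ n)‖ ≤
        ‖(S (1 / 2 ^ n)).comp (T (1 / 2 ^ n))‖ ^ (2 ^ n) ∧
      ‖(S (1 / 2 ^ n)).comp (T (1 / 2 ^ n))‖ ^ (2 ^ n) ≤ ‖(S 1).comp (T 1)‖ := by
  obtain ⟨-, hSadd, hSsa, -, -⟩ := hS
  obtain ⟨-, hTadd, hTsa, -, -⟩ := hT
  have tpos : ∀ n : ℕ, (0 : ℝ) ≤ 1 / 2 ^ n := fun n => by positivity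
  -- the key induction
  have main : ∀ n : ℕ,
      ‖(S (1 / 2 ^ n)).comp (T (1 / 2 ^ n))‖ ^ (2 ^ n) ≤ ‖(S 1).comp (T 1)‖ := by
    intro n
    induction n with
    | zero => simp
    | succ n ih =>
      have half : (1 : ℝ) / 2 ^ (n + 1) + 1 / 2 ^ (n + 1) = 1 / 2 ^ n := by
        rw [← add_div]
        ring
      set s := S (1 / 2 ^ (n + 1)) with hs_def
      set t := T (1 / 2 ^ (n + 1)) with ht_def
      have hSsq : S (1 / 2 ^ n) = s * s := by
        rw [← half, hSadd _ _ (tpos _) (tpos _), ContinuousLinearMap.mul_def]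
      have hTsq : T (1 / 2 ^ n) = t * t := by
        rw [← half, hTadd _ _ (tpos _) (tpos _), ContinuousLinearMap.mul_def]
      have hkey : ‖s * t‖ ^ 2 ≤ ‖(s * s) * (t * t)‖ :=
        key_step s t (hSsa _ (tpos _)) (hTsa _ (tpos _))
      have e1 : ‖(S (1 / 2 ^ (n+1))).comp (T (1 / 2 ^ (n+1)))‖ ^ 2 ^ (n + 1)
          = (‖s * t‖ ^ 2) ^ 2 ^ n := by
        rw [← ContinuousLinearMap.mul_def]
        rw [pow_succ (2:ℕ) n, pow_mul']
      calc ‖(S (1 / 2 ^ (n+1))).comp (T (1 / 2 ^ (n+1)))‖ ^ 2 ^ (n + 1)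
          = (‖s * t‖ ^ 2) ^ 2 ^ n := e1
        _ ≤ ‖(s * s) * (t * t)‖ ^ 2 ^ n :=
            pow_le_pow_left₀ (by positivity) hkey _
        _ = ‖(S (1 / 2 ^ n)).comp (T (1 / 2 ^ n))‖ ^ 2 ^ n := by
            rw [hSsq, hTsq, ContinuousLinearMap.mul_def]
        _ ≤ ‖(S 1).comp (T 1)‖ := ih
  intro n
  refine ⟨?_, main n⟩
  rw [← ContinuousLinearMap.mul_def]
  exact norm_pow_le' _ (Nat.pow_pos (n := n) (by norm_num))
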